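/- Let k ≥ 2 be an integer, let c_i = k^{i−1} for 1 ≤ i ≤ k−1 and c_k = −∑_{i=1}^{k−1} k^{i−1}, let p be a prime with p > (k+1)·k^{k−1}, and set q_i = (p + c_i)/(kp) ∈ ℚ for 1 ≤ i ≤ k. Suppose u, v ∈ ℚ_{≥0} both have nonnegative p-adic valuation, and l_1, …, l_k are nonnegative integers with l_1 + … + l_k > 0 and u = v + ∑_{i=1}^k l_i·q_i. Then either u > 1, or u = 1, v = 0, and l_1 = … = l_k = 1. -/

import Mathlib

open Finset in
lemma digits_unique' {k : ℕ} (hk : 0 < k) :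
    ∀ (n : ℕ) (f : ℕ → ℕ) (m : ℕ), m < k → (∀ i < n, f i < k) →
      (∑ i ∈ range n, f i * k ^ i) = m * ∑ i ∈ range n, k ^ i →
      ∀ i < n, f i = m := by
  intro n
  induction n with
  | zero => intro f m _ _ _ i hi; omega
  | succ n ih =>
    intro f m hm hf heq i hi
    rw [Finset.sum_range_succ', Finset.sum_range_succ' (fun i => (k:ℕ)^i)] at heq
    simp only [pow_zero, pow_succ, mul_one, ← mul_assoc] at heq
    rw [← Finset.sum_mul, ← Finset.sum_mul, Nat.mul_add] at heq
    set A := ∑ i ∈ range n, f (i + 1) * k ^ i with hA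
    set B := ∑ i ∈ range n, k ^ i with hB
    rw [← mul_assoc, mul_one] at heq
    -- heq : A * k + f 0 = m * B * k + m
    have hf0 : f 0 = m := by
      have h1 := congrArg (· % k) heq
      simp only [mul_comm _ k] at h1
      simp only [Nat.mul_add_mod] at h1
      rwa [Nat.mod_eq_of_lt (hf 0 (by omega)), Nat.mod_eq_of_lt hm] at h1
    rcases Nat.eq_zero_or_pos i with rfl | hipos
    · exact hf0
    · have hAB : A = m * B := by
        have : A * k = m * B * k := by omega
        exact Nat.eq_of_mul_eq_mul_right hk this
      obtain ⟨j, rfl⟩ : ∃ j, i = j + 1 := ⟨i - 1, by omega⟩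
      exact ih (fun i => f (i + 1)) m hm (fun i h => hf (i + 1) (by omega)) hAB j (by omega)


lemma arith_aux (k p L C S X : ℤ) (hk : 2 ≤ k) (hpk : (k+1)*X < p)
    (hCpos : 0 < C) (hCle : C ≤ X - 1) (hSlo : -(L*C) ≤ S) (hShi : S ≤ L*C)
    (hZ : L*p + S ≤ k*p) (hLpos : 0 ≤ L) (hXpos : 0 < X) :
    L ≤ k ∧ -p < S ∧ S < p := by
  have hpC : C < p := by nlinarith
  have hLk : L ≤ k := by
    by_contra hcon
    push_neg at hcon
    have hL' : k + 1 ≤ L := by omega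
    have h1 : (k+1) * (p - C) ≤ L * (p - C) :=
      mul_le_mul_of_nonneg_right hL' (by linarith)
    have h2 : L * (p - C) ≤ k * p := by nlinarith
    have h3 : (k+1) * C ≤ (k+1) * (X - 1) :=
      mul_le_mul_of_nonneg_left hCle (by linarith)
    nlinarith
  have h4 : L * C ≤ k * C := mul_le_mul_of_nonneg_right hLk hCpos.le
  have h5 : k * C ≤ k * (X - 1) := mul_le_mul_of_nonneg_left hCle (by linarith)
  exact ⟨hLk, by nlinarith, by nlinarith⟩



/-- With `k ≥ 2`, the explicit integers `c i = k^i` (for `i + 1 < k`,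
indexing from `0`) and `c (k-1) = -∑_{j<k-1} k^j`, a prime `p > (k+1)·k^(k-1)`,
and `q i = (p + c i)/(k·p)`: if `u, v ∈ ℚ_{≥0}` both have nonnegative `p`-adic
valuation (when nonzero), and `l 1, …, l k` are nonnegative integers, not all zero,
with `u = v + ∑ l i · q i`, then either `u > 1`, or `u = 1`, `v = 0` and all `l i = 1`. -/
theorem stmt5 (k : ℕ) (hk : 2 ≤ k) (p : ℕ) (hp : p.Prime)
    (hpk : ((k : ℤ) + 1) * (k : ℤ) ^ (k - 1) < (p : ℤ))
    (c : Fin k → ℤ)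
    (hc : ∀ i : Fin k, c i =
      if (i : ℕ) + 1 < k then (k : ℤ) ^ (i : ℕ)
      else -(∑ j ∈ Finset.range (k - 1), (k : ℤ) ^ j))
    (q : Fin k → ℚ) (hq : ∀ i, q i = ((p : ℚ) + (c i : ℚ)) / ((k : ℚ) * (p : ℚ)))
    (u v : ℚ) (hu : 0 ≤ u) (hv : 0 ≤ v)
    (hu' : u ≠ 0 → 0 ≤ padicValRat p u) (hv' : v ≠ 0 → 0 ≤ padicValRat p v)
    (l : Fin k → ℕ) (hl : 0 < ∑ i, l i)
    (heq : u = v + ∑ i, (l i : ℚ) * q i) :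
    1 < u ∨ (u = 1 ∧ v = 0 ∧ ∀ i, l i = 1) := by
  set C : ℤ := ∑ j ∈ Finset.range (k - 1), (k : ℤ) ^ j with hC
  set L : ℕ := ∑ i, l i with hL
  set S : ℤ := ∑ i, (l i : ℤ) * c i with hS
  have hn : 1 ≤ k - 1 := by omega
  have hppos : 0 < (p : ℤ) := by exact_mod_cast hp.pos
  have hpQ : (0:ℚ) < p := by exact_mod_cast hp.pos
  have hkQ0 : (0:ℚ) < (k : ℚ) * p := by
    have : (0:ℚ) < k := by exact_mod_cast (by omega : 0 < k)
    positivity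
  have hkQ : ((k : ℚ) * p) ≠ 0 := ne_of_gt hkQ0
  have hCpos : 0 < C := by
    rw [hC]
    apply Finset.sum_pos (fun j _ => by positivity)
    exact ⟨0, Finset.mem_range.2 (by omega)⟩
  have hCle : C ≤ (k : ℤ) ^ (k - 1) - 1 := by
    have hg : C * ((k : ℤ) - 1) = (k : ℤ) ^ (k - 1) - 1 := geom_sum_mul _ _
    nlinarith [hCpos, (by exact_mod_cast hk : (2:ℤ) ≤ (k:ℤ))]
  have hclo : ∀ i, -C ≤ c i := by
    intro i; rw [hc i]
    split
    · have : (0:ℤ) ≤ (k:ℤ) ^ (i:ℕ) := by positivity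
      omega
    · omega
  have hchi : ∀ i, c i ≤ C := by
    intro i; rw [hc i]
    split
    · rename_i h
      exact Finset.single_le_sum (f := fun j => (k:ℤ)^j) (fun j _ => by positivity)
        (Finset.mem_range.2 (by omega))
    · omega
  have hShi : S ≤ (L : ℤ) * C := by
    rw [hS, hL]
    push_cast
    rw [Finset.sum_mul]
    exact Finset.sum_le_sum (fun i _ => by
      have := hchi i
      have : (l i : ℤ) * c i ≤ (l i : ℤ) * C :=
        mul_le_mul_of_nonneg_left (hchi i) (by positivity)
      exact this)
  have hSlo : -((L : ℤ) * C) ≤ S := by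
    rw [hS, hL]
    push_cast
    rw [Finset.sum_mul, ← Finset.sum_neg_distrib]
    exact Finset.sum_le_sum (fun i _ => by
      have h1 : (l i : ℤ) * (-C) ≤ (l i : ℤ) * c i :=
        mul_le_mul_of_nonneg_left (hclo i) (by positivity)
      linarith)
  -- main equation
  have hsum : ∑ i, (l i : ℚ) * q i = ((L : ℚ) * p + (S : ℚ)) / ((k : ℚ) * p) := by
    rw [Finset.sum_congr rfl (fun i (_ : i ∈ Finset.univ) => by
      rw [hq i, show ((l i : ℚ)) * (((p:ℚ) + (c i : ℚ)) / ((k:ℚ)*p))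
        = ((l i : ℚ) * p + ((l i : ℤ) * c i : ℤ)) / ((k:ℚ)*p) by push_cast; ring])]
    rw [← Finset.sum_div]
    congr 1
    rw [Finset.sum_add_distrib, ← Finset.sum_mul, hL, hS]
    push_cast
    ring
  have hmain : (k : ℚ) * p * u = (k : ℚ) * p * v + (L : ℚ) * p + (S : ℚ) := by
    rw [heq, hsum]
    field_simp
    ring
  haveI : Fact p.Prime := ⟨hp⟩
  have hnorm_le_one : ∀ w : ℚ, (w ≠ 0 → 0 ≤ padicValRat p w) → padicNorm p w ≤ 1 := by
    intro w hw
    rcases eq_or_ne w 0 with rfl | h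
    · simp [padicNorm]
    · rw [padicNorm.eq_zpow_of_nonzero h]
      apply zpow_le_one_of_nonpos₀
      · exact_mod_cast hp.one_lt.le
      · simpa using hw h
  have hfac : ((S : ℚ)) = (p : ℚ) * ((k : ℚ) * u - (k : ℚ) * v - (L : ℚ)) := by
    linear_combination (-1 : ℚ) * hmain
  have hdvd : (p : ℤ) ∣ S := by
    rw [← padicNorm.int_lt_one_iff]
    have hX : padicNorm p ((k : ℚ) * u - (k : ℚ) * v - (L : ℚ)) ≤ 1 := by
      refine le_trans padicNorm.sub ?_
      refine max_le (le_trans padicNorm.sub ?_) (padicNorm.of_nat L)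
      have h1 : padicNorm p ((k:ℚ) * u) ≤ 1 := by
        rw [padicNorm.mul]
        exact mul_le_one₀ (padicNorm.of_nat k) (padicNorm.nonneg _)
          (hnorm_le_one u hu')
      have h2 : padicNorm p ((k:ℚ) * v) ≤ 1 := by
        rw [padicNorm.mul]
        exact mul_le_one₀ (padicNorm.of_nat k) (padicNorm.nonneg _)
          (hnorm_le_one v hv')
      exact max_le h1 h2
    calc padicNorm p (S : ℚ)
        = padicNorm p p * padicNorm p ((k:ℚ) * u - (k:ℚ) * v - (L:ℚ)) := by
          rw [← padicNorm.mul, ← hfac]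
      _ ≤ padicNorm p p := mul_le_of_le_one_right (padicNorm.nonneg _) hX
      _ < 1 := padicNorm.padicNorm_p_lt_one hp.one_lt
  by_cases h1 : 1 < u
  · exact Or.inl h1
  push_neg at h1
  right
  -- L ≤ k
  have hZ : (L : ℤ) * p + S ≤ (k : ℤ) * p := by
    have hQ : (L : ℚ) * p + (S : ℚ) ≤ (k : ℚ) * p := by
      have h2 : (k : ℚ) * p * u ≤ (k : ℚ) * p := by
        nlinarith
      nlinarith [mul_nonneg (le_of_lt hkQ0) hv]
    exact_mod_cast hQ
  have hkZ : (2:ℤ) ≤ (k:ℤ) := by exact_mod_cast hk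
  have hXpos : (0:ℤ) < (k:ℤ) ^ (k - 1) := pow_pos (by linarith) _
  obtain ⟨hLk, hSlo', hShi'⟩ := arith_aux (k:ℤ) (p:ℤ) (L:ℤ) C S ((k:ℤ) ^ (k-1))
    hkZ hpk hCpos hCle hSlo hShi hZ (by positivity) hXpos
  have hS0 : S = 0 := Int.eq_zero_of_abs_lt_dvd hdvd (abs_lt.2 ⟨hSlo', hShi'⟩)
  -- digit extraction
  obtain ⟨n, rfl⟩ : ∃ n, k = n + 1 := ⟨k - 1, by omega⟩
  have hn1 : 1 ≤ n := by omega
  have hC' : C = ∑ j ∈ Finset.range n, ((n+1 : ℕ) : ℤ) ^ j := by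
    rw [hC]; norm_num
  set m : ℕ := l (Fin.last n) with hm
  set g : ℕ → ℕ := fun i => l ⟨i % (n+1), Nat.mod_lt _ (by omega)⟩ with hgdef
  have hg : ∀ i : Fin (n+1), l i = g i.val := by
    intro i
    have : (⟨i.val % (n+1), Nat.mod_lt _ (by omega)⟩ : Fin (n+1)) = i := by
      ext; simp [Nat.mod_eq_of_lt i.isLt]
    rw [hgdef]; simp only []; rw [this]
  have hgm : g n = m := by
    rw [hgdef]; simp only []
    congr 1
    ext
    simp [Fin.last]
  set Cn : ℕ := ∑ j ∈ Finset.range n, (n+1) ^ j with hCn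
  have hCcast : C = (Cn : ℤ) := by rw [hC', hCn]; push_cast; ring
  have hkey : ∑ i ∈ Finset.range n, g i * (n+1) ^ i = m * Cn := by
    have h0 : (0:ℤ) = ∑ i : Fin n, (g i.val : ℤ) * ((n:ℤ)+1) ^ (i:ℕ) + (m:ℤ) * (-(Cn:ℤ)) := by
      rw [← hS0, hS, Fin.sum_univ_castSucc]
      congr 1
      · apply Finset.sum_congr rfl
        intro i _
        rw [hc, hg]
        simp only [Fin.coe_castSucc]
        rw [if_pos (by omega : (i:ℕ) + 1 < n + 1)]
        push_cast
        ring
      · rw [hc]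
        simp only [Fin.val_last]
        rw [if_neg (by omega), hCcast]
    have h1 : ((∑ i ∈ Finset.range n, g i * (n+1) ^ i : ℕ) : ℤ) = ((m * Cn : ℕ) : ℤ) := by
      push_cast
      rw [← Fin.sum_univ_eq_sum_range (fun i => (g i : ℤ) * ((n:ℤ)+1) ^ i) n]
      linarith [h0]
    exact_mod_cast h1
  have hLsplit : ∑ i ∈ Finset.range n, g i + m = L := by
    rw [hL, Fin.sum_univ_castSucc, hm]
    congr 1
    rw [← Fin.sum_univ_eq_sum_range (fun i => g i) n]
    apply Finset.sum_congr rfl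
    intro i _
    rw [hg]
    rfl
  have hLn : L ≤ n + 1 := by exact_mod_cast hLk
  have hm1 : 1 ≤ m := by
    rcases Nat.eq_zero_or_pos m with h0 | h
    · exfalso
      rw [h0, Nat.zero_mul] at hkey
      have hz : ∀ i ∈ Finset.range n, g i * (n+1) ^ i = 0 :=
        (Finset.sum_eq_zero_iff).1 hkey
      have : ∑ i ∈ Finset.range n, g i = 0 := by
        apply Finset.sum_eq_zero
        intro i hi
        have h2 := hz i hi
        have h3 : 0 < (n+1) ^ i := Nat.pow_pos (by omega)
        exact (mul_eq_zero.mp h2) |>.resolve_right (by omega)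
      rw [hL] at hl
      omega
    · exact h
  have h2m : 2 * m ≤ L := by
    have hub : ∑ i ∈ Finset.range n, g i * (n+1) ^ i
        ≤ (∑ i ∈ Finset.range n, g i) * (n+1) ^ (n-1) := by
      rw [Finset.sum_mul]
      apply Finset.sum_le_sum
      intro i hi
      exact Nat.mul_le_mul_left _ (Nat.pow_le_pow_right (by omega)
        (by have := Finset.mem_range.1 hi; omega))
    have hlb : m * (n+1) ^ (n-1) ≤ m * Cn := by
      apply Nat.mul_le_mul_left
      rw [hCn]
      exact Finset.single_le_sum (f := fun j => (n+1)^j) (fun j _ => Nat.zero_le _)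
        (Finset.mem_range.2 (by omega))
    have := le_trans hlb (hkey ▸ hub)
    have hmle : m ≤ ∑ i ∈ Finset.range n, g i :=
      Nat.le_of_mul_le_mul_right this (Nat.pow_pos (by omega))
    omega
  have hgm_lt : ∀ i < n, g i < n + 1 := by
    intro i hi
    have : g i ≤ ∑ j ∈ Finset.range n, g j :=
      Finset.single_le_sum (fun j _ => Nat.zero_le _) (Finset.mem_range.2 hi)
    omega
  have hdig : ∀ i < n, g i = m :=
    digits_unique' (k := n+1) (by omega) n g m (by omega) hgm_lt hkey
  have hsg : ∑ i ∈ Finset.range n, g i = n * m := by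
    rw [Finset.sum_congr rfl (fun i hi => hdig i (Finset.mem_range.1 hi))]
    simp [Finset.sum_const, Finset.card_range, Nat.smul_one_eq_cast]
  have he : (n + 1) * m = L := by rw [← hLsplit, hsg]; ring
  have hmeq1 : m = 1 := by
    have h6 : (n + 1) * m ≤ (n + 1) * 1 := by rw [he, Nat.mul_one]; exact hLn
    have := Nat.le_of_mul_le_mul_left h6 (by omega)
    omega
  have hall : ∀ i : Fin (n+1), l i = 1 := by
    intro i
    rw [hg i]
    rcases Nat.lt_or_ge i.val n with h | h
    · rw [hdig i.val h, hmeq1]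
    · have : i.val = n := by omega
      rw [this, hgm, hmeq1]
  have hLeq : L = n + 1 := by rw [← he, hmeq1, Nat.mul_one]
  -- conclude
  have huv : u = v + 1 := by
    have : ((n+1:ℕ) : ℚ) * p * u = ((n+1:ℕ) : ℚ) * p * (v + 1) := by
      rw [hmain, hS0, hLeq]
      push_cast
      ring
    exact mul_left_cancel₀ hkQ this
  constructor
  · linarith
  constructor
  · linarith
  · exact hall
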